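/- Under the same setup but with the roles reversed — z = y₁ in the closed first quadrant with Re y₁ > L (so n = (0,−1)) and the target point x = (x₁, x₂) real with |x₁| ≤ L − δ, |x₂| ≤ H — the kernel g(x, y) = −(ik/2) H₁⁽¹⁾(k r) · ((x₁ − y₁, x₂)·(0,−1)) / r, with r = √((x₁ − y₁)² + x₂²), satisfies |g(x,y)| ≤ C₂ · e^{−k|Im y₁|} / (1 + |y₁|)^{3/2} for a constant C₂ depending on L, δ, H, k. -/

import Mathlib

open Complex

noncomputable section

set_option maxHeartbeats 1000000 in

private lemma le_of_sq_le' {a b : ℝ} (ha : 0 ≤ a) (hb : 0 ≤ b) (h : a^2 ≤ b^2) : a ≤ b := by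
  nlinarith

private lemma sqrt_re_nonneg (w : ℂ) (hw : w ≠ 0) : 0 ≤ (w ^ ((1:ℂ)/2)).re := by
  rw [Complex.cpow_def_of_ne_zero hw]
  rw [Complex.exp_re]
  have him : (Complex.log w * ((1:ℂ)/2)).im = Complex.arg w / 2 := by
    simp [Complex.mul_im, Complex.log_im]
    ring
  rw [him]
  have h1 := Complex.arg_le_pi w
  have h2 := Complex.neg_pi_lt_arg w
  have : 0 ≤ Real.cos (Complex.arg w / 2) := by
    apply Real.cos_nonneg_of_mem_Icc
    constructor <;> [linarith; linarith]
  positivity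

private lemma sqrt_im_nonneg (w : ℂ) (hw : w ≠ 0) (him : 0 ≤ w.im) : 0 ≤ (w ^ ((1:ℂ)/2)).im := by
  rw [Complex.cpow_def_of_ne_zero hw]
  rw [Complex.exp_im]
  have h : (Complex.log w * ((1:ℂ)/2)).im = Complex.arg w / 2 := by
    simp [Complex.mul_im, Complex.log_im]
    ring
  rw [h]
  have h1 := Complex.arg_le_pi w
  have h2 := Complex.arg_nonneg_iff.2 him
  have : 0 ≤ Real.sin (Complex.arg w / 2) := by
    apply Real.sin_nonneg_of_nonneg_of_le_pi <;> linarith [Real.pi_pos]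
  positivity

private lemma sqrt_sq_eq (w : ℂ) : (w ^ ((1:ℂ)/2)) ^ (2:ℕ) = w := by
  rw [show ((1:ℂ)/2) = (((2:ℕ)):ℂ)⁻¹ by norm_num]
  exact Complex.cpow_nat_inv_pow w two_ne_zero

private lemma abs_sqrt (w : ℂ) : ‖w ^ ((1:ℂ)/2)‖ = Real.sqrt (‖w‖) := by
  rw [show ((1:ℂ)/2) = (((1/2:ℝ)):ℂ) by norm_num, Complex.norm_cpow_real, Real.sqrt_eq_rpow]

private lemma bound_Y (δ L A b x₁ Y : ℝ) (hδ : 0 < δ) (hδL : δ < L) (hA : δ ≤ A)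
    (hx : x₁^2 ≤ L^2) (hY : Y^2 = (A+x₁)^2 + b^2) (hY0 : 0 ≤ Y) :
    δ^2*(1+Y)^2 ≤ (2 + 4*L^2 + 4*δ^2)*(A^2+b^2) := by
  have hδ2A : δ^2 ≤ A^2 := by nlinarith
  have hδ2L : δ^2 ≤ L^2 := by nlinarith
  have ha2 : (A+x₁)^2 ≤ 2*A^2 + 2*L^2 := by nlinarith [sq_nonneg (A - x₁)]
  have h1 : (1+Y)^2 ≤ 2 + 2*((A+x₁)^2 + b^2) := by nlinarith [sq_nonneg (1-Y)]
  nlinarith [mul_le_mul_of_nonneg_left h1 (sq_nonneg δ),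
    mul_le_mul_of_nonneg_left ha2 (sq_nonneg δ),
    mul_le_mul_of_nonneg_right hδ2A (sq_nonneg L),
    mul_le_mul_of_nonneg_right hδ2L (sq_nonneg b),
    mul_nonneg (sq_nonneg L) (sq_nonneg b), mul_nonneg (sq_nonneg δ) (sq_nonneg b),
    mul_nonneg (sq_nonneg A) (sq_nonneg L), mul_nonneg (sq_nonneg δ) (sq_nonneg A),
    sq_nonneg A, sq_nonneg b]

private lemma bound_W (δ H A b c W : ℝ) (hδ : 0 < δ) (hH : 0 < H) (hc0 : 0 ≤ c)
    (hc : c ≤ H^2) (hA : δ^2 ≤ A^2) (hW0 : 0 ≤ W) (h1 : A^2 ≤ W)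
    (h2 : A^2 + b^2 - c ≤ W) : δ^2*(A^2+b^2) ≤ (2*δ^2+2*H^2)*W := by
  rcases le_or_gt (2*H^2) (b^2) with h | h
  · have h3 : A^2 + b^2 ≤ 2*W := by linarith [sq_nonneg A]
    have := mul_le_mul_of_nonneg_left h3 (sq_nonneg δ)
    nlinarith [mul_nonneg (sq_nonneg H) hW0]
  · nlinarith [mul_le_mul_of_nonneg_left h1 (sq_nonneg δ),
      mul_le_mul_of_nonneg_left h1 (by positivity : (0:ℝ) ≤ 2*H^2),
      mul_le_mul_of_nonneg_left hA (by positivity : (0:ℝ) ≤ 2*H^2),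
      mul_le_mul_of_nonneg_left h.le (sq_nonneg δ)]


private lemma W_lower (A b c W : ℝ) (hc0 : 0 ≤ c) (hW0 : 0 ≤ W)
    (hW2 : W^2 = (A^2 - b^2 + c)^2 + (2*A*b)^2) : A^2 ≤ W ∧ A^2 + b^2 - c ≤ W := by
  constructor
  · apply le_of_sq_le' (sq_nonneg A) hW0
    nlinarith [sq_nonneg (b^2 - c), mul_nonneg (sq_nonneg A) (add_nonneg (sq_nonneg b) hc0)]
  · rcases le_or_gt (A^2 + b^2 - c) 0 with h | h
    · linarith [sq_nonneg A, sq_nonneg b]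
    · apply le_of_sq_le' h.le hW0
      nlinarith [mul_nonneg (mul_nonneg (sq_nonneg A) hc0) (sq_nonneg b),
        mul_nonneg (sq_nonneg A) hc0]

private lemma q_lower (b H c q : ℝ) (hH : 0 < H) (hq0 : 0 ≤ q) (hb : 0 ≤ b)
    (hc : c ≤ H^2) (h2 : b^2 - c ≤ q^2) : b - H ≤ q := by
  rcases le_or_gt b H with h | h
  · linarith
  · apply le_of_sq_le' (by linarith) hq0
    nlinarith [mul_pos (sub_pos.2 h) hH]

/-- The complexified distance `r = √((x₁ - y₁)² + x₂²)` (principal branch),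
for a real target `(x₁, x₂)` and a complexified source `(y₁, 0)`. -/
def complexDist' (x₁ x₂ : ℝ) (y₁ : ℂ) : ℂ :=
  (((x₁ : ℂ) - y₁) ^ 2 + (x₂ : ℂ) ^ 2) ^ ((1 : ℂ) / 2)

/-- The kernel `g(x,y) = -(ik/2) H₁⁽¹⁾(k r) ((x₁ - y₁, x₂) ⋅ (0,-1)) / r`
with a real target `(x₁, x₂)` and complexified source `(y₁, 0)`, whose normal
is `(0, -1)`. -/
def kernelG' (Hf : ℂ → ℂ) (k : ℝ) (x₁ x₂ : ℝ) (y₁ : ℂ) : ℂ :=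
  -(Complex.I * k / 2) * Hf (k * complexDist' x₁ x₂ y₁) *
    (-(x₂ : ℂ)) / complexDist' x₁ x₂ y₁

set_option maxHeartbeats 1000000 in
/-- Kernel estimate for real targets in the perturbed (middle) part of the
boundary and complexified sources in the closed first quadrant beyond `L`. -/
theorem kernel_bound_source_complex
    (k L δ H C₀ : ℝ) (hk : 0 < k) (hδ : 0 < δ) (hδL : δ < L) (hH : 0 < H)
    (Hf : ℂ → ℂ)
    (hHf : ∀ w : ℂ, w ≠ 0 →
      ‖Hf w‖ ≤ C₀ * Real.exp (-w.im) *
        (1 / Real.sqrt ‖w‖ + 1 / ‖w‖)) :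
    ∃ C₂ : ℝ, 0 < C₂ ∧ ∀ (x₁ x₂ : ℝ) (y₁ : ℂ),
      L < y₁.re → 0 ≤ y₁.im → |x₁| ≤ L - δ → |x₂| ≤ H →
      ‖kernelG' Hf k x₁ x₂ y₁‖ ≤
        C₂ * Real.exp (-k * |y₁.im|) / (1 + ‖y₁‖) ^ ((3 : ℝ) / 2) := by
  have hC₀ : 0 ≤ C₀ := by
    have h := hHf 1 one_ne_zero
    rw [norm_one] at h
    simp only [Complex.one_im, neg_zero, Real.exp_zero, Real.sqrt_one, mul_one, one_div,
      inv_one] at h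
    have h0 := norm_nonneg (Hf 1)
    linarith only [h, h0]
  set G : ℝ := 2 + 4*L^2 + 4*δ^2 with hGdef
  have hGpos : 0 < G := by positivity
  set M' : ℝ := 2*δ^2 + 2*H^2 with hMdef
  have hMpos : 0 < M' := by positivity
  set N : ℝ := Real.sqrt (G*M'/δ^4) with hNdef
  have hNpos : 0 < N := Real.sqrt_pos.2 (by positivity)
  set D : ℝ := N*Real.sqrt N/Real.sqrt k + N^2/k with hDdef
  have hDpos : 0 < D := by positivity
  have hcoef0 : (0:ℝ) ≤ k/2*C₀*Real.exp (k*H)*H :=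
    mul_nonneg (mul_nonneg (mul_nonneg (by positivity) hC₀) (Real.exp_nonneg _)) hH.le
  refine ⟨(k/2*C₀*Real.exp (k*H)*H)*D + 1, ?_, ?_⟩
  · have := mul_nonneg hcoef0 hDpos.le
    linarith only [this]
  intro x₁ x₂ y₁ hL hb hx1 hx2
  set a := y₁.re with ha
  set b := y₁.im with hbdef
  set A : ℝ := a - x₁ with hA
  have hAδ : δ ≤ A := by
    have h1 : x₁ ≤ L - δ := le_trans (le_abs_self _) hx1
    simp only [hA]; linarith only [h1, hL]
  have hApos : 0 < A := lt_of_lt_of_le hδ hAδ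
  set w : ℂ := ((x₁ : ℂ) - y₁) ^ 2 + (x₂ : ℂ) ^ 2 with hw
  have hwre : w.re = A^2 - b^2 + x₂^2 := by
    simp [hw, pow_two, Complex.add_re, Complex.mul_re, Complex.sub_re, Complex.sub_im,
      Complex.ofReal_re, Complex.ofReal_im, hA]
    ring
  have hwim : w.im = 2*A*b := by
    simp [hw, pow_two, Complex.add_im, Complex.mul_im, Complex.sub_re, Complex.sub_im,
      Complex.ofReal_re, Complex.ofReal_im, hA]
    ring
  set W : ℝ := ‖w‖ with hWdef
  have hW0 : 0 ≤ W := norm_nonneg w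
  have hW2 : W^2 = (A^2 - b^2 + x₂^2)^2 + (2*A*b)^2 := by
    rw [hWdef, Complex.sq_norm, Complex.normSq_apply, hwre, hwim]; ring
  have hc : x₂^2 ≤ H^2 := by
    rw [← _root_.sq_abs x₂]; exact pow_le_pow_left₀ (abs_nonneg _) hx2 2
  have hu : δ^2 ≤ A^2 := pow_le_pow_left₀ hδ.le hAδ 2
  obtain ⟨hWu, hWvc⟩ := W_lower A b (x₂^2) W (sq_nonneg x₂) hW0 hW2
  -- w nonzero
  have hWpos : 0 < W := lt_of_lt_of_le (by positivity) hWu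
  have hwne : w ≠ 0 := by
    intro h0
    rw [hWdef, h0] at hWpos
    simp at hWpos
  have hwimpos : 0 ≤ w.im := by rw [hwim]; positivity
  -- the square root r
  set r : ℂ := w ^ ((1:ℂ)/2) with hrdef
  have hr2 : r ^ (2:ℕ) = w := sqrt_sq_eq w
  have hrabs : ‖r‖ = Real.sqrt W := abs_sqrt w
  set p : ℝ := r.re with hpdef
  set q : ℝ := r.im with hqdef
  have hp0 : 0 ≤ p := sqrt_re_nonneg w hwne
  have hq0 : 0 ≤ q := sqrt_im_nonneg w hwne hwimpos
  set R : ℝ := ‖r‖ with hRdef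
  have hR : R = Real.sqrt W := hrabs
  have hRpos : 0 < R := by rw [hR]; exact Real.sqrt_pos.2 hWpos
  have hR2 : R^2 = W := by rw [hR]; exact Real.sq_sqrt hW0
  have hpq : p^2 + q^2 = W := by
    have := Complex.sq_norm r
    rw [← hRdef, Complex.normSq_apply, ← hpdef, ← hqdef] at this
    rw [← hR2, this]; ring
  have hre : p^2 - q^2 = w.re := by
    have : w.re = (r ^ (2:ℕ)).re := by rw [hr2]
    rw [pow_two, Complex.mul_re, ← hpdef, ← hqdef] at this
    rw [this]; ring
  have hq2 : b^2 - x₂^2 ≤ q^2 := by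
    rw [hwre] at hre
    linarith only [hWvc, hre, hpq]
  have hqb : b - H ≤ q := q_lower b H (x₂^2) q hH hq0 hb hc hq2
  -- bounds relating W and |y₁|
  set Y : ℝ := ‖y₁‖ with hYdef
  have hY0 : 0 ≤ Y := norm_nonneg y₁
  have hY2 : Y^2 = a^2 + b^2 := by
    rw [hYdef, Complex.sq_norm, Complex.normSq_apply, ← ha, ← hbdef]; ring
  have hx1sq : x₁^2 ≤ L^2 := by
    rw [← _root_.sq_abs x₁]
    have : |x₁| ≤ L := by linarith only [hx1, hδ]
    exact pow_le_pow_left₀ (abs_nonneg _) this 2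
  have hYb : δ^2*(1+Y)^2 ≤ G*(A^2+b^2) := by
    apply bound_Y δ L A b x₁ Y hδ hδL hAδ hx1sq _ hY0
    rw [hY2]
    have : a = A + x₁ := by rw [hA]; ring
    rw [this]
  have hWs : δ^2*(A^2+b^2) ≤ M'*W :=
    bound_W δ H A b (x₂^2) W hδ hH (sq_nonneg x₂) hc hu hW0 hWu hWvc
  have hNR : 1 + Y ≤ N * R := by
    apply le_of_sq_le' (by linarith only [hY0]) (by positivity)
    have hN2 : N^2 = G*M'/δ^4 := Real.sq_sqrt (by positivity)
    have key : δ^4*(1+Y)^2 ≤ G*M'*W := by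
      calc δ^4*(1+Y)^2 = δ^2*(δ^2*(1+Y)^2) := by ring
        _ ≤ δ^2*(G*(A^2+b^2)) := mul_le_mul_of_nonneg_left hYb (sq_nonneg δ)
        _ = G*(δ^2*(A^2+b^2)) := by ring
        _ ≤ G*(M'*W) := mul_le_mul_of_nonneg_left hWs hGpos.le
        _ = G*M'*W := by ring
    have hNR2 : (N*R)^2 = (G*M'/δ^4)*W := by rw [mul_pow, hN2, hR2]
    rw [hNR2, div_mul_eq_mul_div, le_div_iff₀ (by positivity)]
    calc (1+Y)^2*δ^4 = δ^4*(1+Y)^2 := by ring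
      _ ≤ G*M'*W := key
  -- powers of (1+Y)
  have hs1 : (1:ℝ) ≤ 1 + Y := by linarith only [hY0]
  have hspos : (0:ℝ) < 1 + Y := by linarith only [hY0]
  set P : ℝ := (1+Y) ^ ((3:ℝ)/2) with hPdef
  have hPpos : 0 < P := Real.rpow_pos_of_pos hspos _
  have hPeq : P = (1+Y) * Real.sqrt (1+Y) := by
    rw [hPdef, show (3:ℝ)/2 = 1 + 1/2 by norm_num, Real.rpow_add hspos, Real.rpow_one,
      ← Real.sqrt_eq_rpow]
  have hsR : Real.sqrt (1+Y) ≤ Real.sqrt N * Real.sqrt R := by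
    rw [← Real.sqrt_mul hNpos.le]
    exact Real.sqrt_le_sqrt hNR
  have hPle : P ≤ (N*Real.sqrt N)*(R*Real.sqrt R) := by
    rw [hPeq]
    calc (1+Y)*Real.sqrt (1+Y) ≤ (N*R)*(Real.sqrt N*Real.sqrt R) :=
        mul_le_mul hNR hsR (Real.sqrt_nonneg _) (by positivity)
      _ = (N*Real.sqrt N)*(R*Real.sqrt R) := by ring
  have hP2 : P ≤ N^2*R^2 := by
    have h1 : P ≤ (1+Y)^(2:ℝ) := Real.rpow_le_rpow_of_exponent_le hs1 (by norm_num)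
    have h2 : (1+Y)^(2:ℝ) = (1+Y)^(2:ℕ) := by
      rw [← Real.rpow_natCast (1+Y) 2]; norm_num
    have h3 : (1+Y)^(2:ℕ) ≤ (N*R)^(2:ℕ) := pow_le_pow_left₀ (by linarith only [hY0]) hNR 2
    calc P ≤ (1+Y)^(2:ℝ) := h1
      _ = (1+Y)^(2:ℕ) := h2
      _ ≤ (N*R)^(2:ℕ) := h3
      _ = N^2*R^2 := by ring
  -- constants
  have hkR : (0:ℝ) < k*R := by positivity
  have hskpos : (0:ℝ) < Real.sqrt k := Real.sqrt_pos.2 hk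
  have hsRpos : (0:ℝ) < Real.sqrt R := Real.sqrt_pos.2 hRpos
  have hT : (1/Real.sqrt (k*R) + 1/(k*R))/R ≤ D/P := by
    rw [div_le_div_iff₀ hRpos hPpos, hDdef, add_mul, add_mul]
    have e1 : Real.sqrt (k*R) = Real.sqrt k * Real.sqrt R := Real.sqrt_mul hk.le R
    have t1 : 1/Real.sqrt (k*R) * P ≤ N*Real.sqrt N/Real.sqrt k * R := by
      rw [e1, one_div, inv_mul_eq_div, div_le_iff₀ (by positivity)]
      calc P ≤ (N*Real.sqrt N)*(R*Real.sqrt R) := hPle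
        _ = N*Real.sqrt N/Real.sqrt k * R * (Real.sqrt k * Real.sqrt R) := by
            field_simp
    have t2 : 1/(k*R) * P ≤ N^2/k * R := by
      rw [one_div, inv_mul_eq_div, div_le_iff₀ hkR]
      calc P ≤ N^2*R^2 := hP2
        _ = N^2/k * R * (k*R) := by field_simp
    linarith only [t1, t2]
  -- apply the Hankel bound at k*r
  have hrne : r ≠ 0 := by
    intro h0
    rw [hRdef, h0, norm_zero] at hRpos
    exact lt_irrefl 0 hRpos
  have hkrne : (k:ℂ)*r ≠ 0 := mul_ne_zero (by exact_mod_cast hk.ne') hrne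
  have hkrim : ((k:ℂ)*r).im = k*q := by
    simp [Complex.mul_im, hqdef]
  have hkrabs : ‖(k:ℂ)*r‖ = k*R := by
    rw [norm_mul, Complex.norm_real, Real.norm_eq_abs, abs_of_pos hk, hRdef]
  have hF := hHf ((k:ℂ)*r) hkrne
  rw [hkrim, hkrabs] at hF
  have hexp : Real.exp (-(k*q)) ≤ Real.exp (k*H) * Real.exp (-(k*b)) := by
    rw [← Real.exp_add]
    apply Real.exp_le_exp.2
    have h2 : k*(b-H) ≤ k*q := mul_le_mul_of_nonneg_left hqb hk.le
    have h3 : -(k*q) ≤ -(k*(b-H)) := neg_le_neg h2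
    have h4 : -(k*(b-H)) = k*H + -(k*b) := by ring
    exact h4 ▸ h3
  have hFle : ‖Hf ((k:ℂ)*r)‖ ≤
      C₀ * (Real.exp (k*H) * Real.exp (-(k*b))) * (1/Real.sqrt (k*R) + 1/(k*R)) := by
    refine le_trans hF ?_
    have hbr : (0:ℝ) ≤ 1/Real.sqrt (k*R) + 1/(k*R) := by positivity
    exact mul_le_mul_of_nonneg_right (mul_le_mul_of_nonneg_left hexp hC₀) hbr
  -- the absolute value of the kernel
  have habs : ‖kernelG' Hf k x₁ x₂ y₁‖
      = k/2 * ‖Hf ((k:ℂ)*r)‖ * |x₂| / R := by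
    simp only [kernelG', complexDist']
    rw [← hw, ← hrdef, norm_div, norm_mul, norm_mul, norm_neg, norm_neg,
      norm_div, norm_mul, Complex.norm_I, Complex.norm_real, Real.norm_eq_abs, Complex.norm_two,
      Complex.norm_real, Real.norm_eq_abs, abs_of_pos hk, ← hRdef]
    ring
  set F := ‖Hf ((k:ℂ)*r)‖ with hFdef
  have hcoef : (0:ℝ) ≤ k/2*C₀*Real.exp (k*H)*H :=
    mul_nonneg (mul_nonneg (mul_nonneg (by positivity) hC₀) (Real.exp_nonneg _)) hH.le
  have key : ‖kernelG' Hf k x₁ x₂ y₁‖ ≤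
      ((k/2*C₀*Real.exp (k*H)*H)*D + 1) * Real.exp (-(k*b)) / P := by
    rw [habs]
    calc k/2 * F * |x₂| / R
        ≤ k/2 * (C₀ * (Real.exp (k*H) * Real.exp (-(k*b))) * (1/Real.sqrt (k*R) + 1/(k*R))) * H / R := by
          have step := mul_le_mul hFle hx2 (abs_nonneg x₂)
            (mul_nonneg (mul_nonneg hC₀ (mul_nonneg (Real.exp_nonneg _) (Real.exp_nonneg _)))
              (by positivity))
          have step2 := mul_le_mul_of_nonneg_left step (by positivity : (0:ℝ) ≤ k/2)
          apply (div_le_div_iff_of_pos_right hRpos).mpr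
          calc k/2 * F * |x₂| = k/2 * (F * |x₂|) := by ring
              _ ≤ k/2 * (C₀ * (Real.exp (k*H) * Real.exp (-(k*b))) * (1/Real.sqrt (k*R) + 1/(k*R)) * H) := step2
              _ = k/2 * (C₀ * (Real.exp (k*H) * Real.exp (-(k*b))) * (1/Real.sqrt (k*R) + 1/(k*R))) * H := by ring
      _ = (k/2*C₀*Real.exp (k*H)*H) * Real.exp (-(k*b)) * ((1/Real.sqrt (k*R) + 1/(k*R))/R) := by
          ring
      _ ≤ (k/2*C₀*Real.exp (k*H)*H) * Real.exp (-(k*b)) * (D/P) := by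
          apply mul_le_mul_of_nonneg_left hT
          exact mul_nonneg hcoef (Real.exp_nonneg _)
      _ = ((k/2*C₀*Real.exp (k*H)*H)*D) * Real.exp (-(k*b)) / P := by ring
      _ ≤ ((k/2*C₀*Real.exp (k*H)*H)*D + 1) * Real.exp (-(k*b)) / P := by
          gcongr
          linarith only []
  have hbabs : -k*|y₁.im| = -(k*b) := by
    rw [← hbdef, _root_.abs_of_nonneg hb]; ring
  rw [hbabs]
  exact key

end
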